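/- Horn's asymptotic Ansatz solves the modified equation exactly: let κ ∈ ℂ and let α : ℝ → ℂ be twice differentiable with κ + (1/2)α(t) lying in the slit plane ℂ ∖ (−∞,0] for all t in an open interval I. For σ = ±1 define Z_σ(t) := exp( σ( κ t + (1/2)∫₀ᵗ α(s) ds ) ) / ( κ + (1/2)α(t) )^{1/2}, using the principal complex square root. Then Z_σ is twice differentiable on I and satisfies Z_σ''(t) = ( κ² + κ α(t) + γ(t) ) Z_σ(t), where γ(t) := α(t)²/4 + 3 α'(t)² / ( 16 (κ + (1/2)α(t))² ) − α''(t) / ( 4 (κ + (1/2)α(t)) ). -/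

import Mathlib

private lemma horn_aux (x a1 a2 s : ℂ) (hx : x ≠ 0) (hs : s = 1 ∨ s = -1) :
    x ^ 2 + 3 * a1 ^ 2 / (16 * x ^ 2) - a2 / (4 * x) =
      (s * (a1 / 2) - (a2 * (4 * x) - a1 * (4 * (a1 / 2))) / (4 * x) ^ 2) +
      (s * x - a1 / (4 * x)) * (s * x - a1 / (4 * x)) := by
  have h1 : x ^ 4 * x⁻¹ ^ 4 = 1 := by
    rw [← mul_pow, mul_inv_cancel₀ hx, one_pow]
  rcases hs with rfl | rfl <;> field_simp <;>
    ring

set_option maxHeartbeats 1000000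


/-- Horn's asymptotic Ansatz solves the modified equation exactly: for twice differentiable
`α` with `κ + α(t)/2` in the slit plane on an open interval `I`, the function
`Z_σ(t) = exp(σ(κt + (1/2)∫₀ᵗα)) / (κ + α(t)/2)^{1/2}` (σ = ±1) is twice differentiable
on `I` and satisfies `Z_σ'' = (κ² + κα + γ) Z_σ`, where
`γ = α²/4 + 3α'²/(16(κ+α/2)²) − α''/(4(κ+α/2))`. -/
theorem horn_ansatz_solves_modified_equation (κ : ℂ) (α α' α'' : ℝ → ℂ)
    (hα : ∀ t : ℝ, HasDerivAt α (α' t) t) (hα' : ∀ t : ℝ, HasDerivAt α' (α'' t) t)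
    (a b : ℝ) (I : Set ℝ) (hI : I = Set.Ioo a b)
    (hslit : ∀ t ∈ I, κ + α t / 2 ∈ Complex.slitPlane)
    (σ : ℝ) (hσ : σ = 1 ∨ σ = -1)
    (Z : ℝ → ℂ)
    (hZ : ∀ t : ℝ, Z t =
      Complex.exp ((σ : ℂ) * (κ * t + (1 / 2) * ∫ s in (0:ℝ)..t, α s)) /
        (κ + α t / 2) ^ ((1:ℂ) / 2)) :
    ∃ Z' Z'' : ℝ → ℂ,
      (∀ t ∈ I, HasDerivAt Z (Z' t) t) ∧
      (∀ t ∈ I, HasDerivAt Z' (Z'' t) t) ∧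
      (∀ t ∈ I, Z'' t =
        (κ ^ 2 + κ * α t +
          (α t ^ 2 / 4 + 3 * α' t ^ 2 / (16 * (κ + α t / 2) ^ 2) -
            α'' t / (4 * (κ + α t / 2)))) * Z t) := by
  have hc : Continuous α := continuous_iff_continuousAt.mpr fun t => (hα t).continuousAt
  set g : ℝ → ℂ := fun t => κ + α t / 2 with hgdef
  have hg : ∀ t, HasDerivAt g (α' t / 2) t := fun t => ((hα t).div_const 2).const_add κ
  set h : ℝ → ℂ := fun t => σ * g t - α' t / (4 * g t) with hhdef
  have hg0 : ∀ t ∈ I, g t ≠ 0 := fun t ht => Complex.slitPlane_ne_zero (hslit t ht)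
  -- first derivative
  have hA : ∀ t ∈ I, HasDerivAt Z (h t * Z t) t := by
    intro t ht
    have hZf : Z = fun u : ℝ =>
        Complex.exp ((σ : ℂ) * (κ * u + (1 / 2) * ∫ s in (0:ℝ)..u, α s)) /
          g u ^ ((1:ℂ) / 2) := funext hZ
    have hInt : HasDerivAt (fun u : ℝ => ∫ s in (0:ℝ)..u, α s) (α t) t :=
      intervalIntegral.integral_hasDerivAt_right (hc.intervalIntegrable 0 t)
        (hc.stronglyMeasurableAtFilter _ _) hc.continuousAt
    have h1 : HasDerivAt (fun u : ℝ => κ * (u : ℂ)) κ t := by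
      simpa using (Complex.ofRealCLM.hasDerivAt (x := t)).const_mul κ
    have hF : HasDerivAt (fun u : ℝ => (σ : ℂ) * (κ * u + (1 / 2) * ∫ s in (0:ℝ)..u, α s))
        ((σ : ℂ) * (κ + (1 / 2) * α t)) t := (h1.add (hInt.const_mul (1/2))).const_mul _
    have hE := hF.cexp
    have hW : HasDerivAt (fun u => g u ^ ((1:ℂ)/2))
        (((1:ℂ)/2) * g t ^ ((1:ℂ)/2 - 1) * (α' t / 2)) t := by
      have hcp : HasDerivAt (fun z : ℂ => z ^ ((1:ℂ)/2))
          (((1:ℂ)/2) * g t ^ ((1:ℂ)/2 - 1)) (g t) :=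
        (Complex.hasStrictDerivAt_cpow_const (hslit t ht)).hasDerivAt
      have := (hcp.hasFDerivAt.restrictScalars ℝ).comp_hasDerivAt t (hg t)
      rw [Function.comp_def] at this
      exact this.congr_deriv (by
        show (α' t / 2) • ((1:ℂ)/2 * g t ^ ((1:ℂ)/2 - 1)) = _
        rw [smul_eq_mul]; ring)
    have hW0 : g t ^ ((1:ℂ)/2) ≠ 0 := by
      rw [Complex.cpow_def_of_ne_zero (hg0 t ht)]; exact Complex.exp_ne_zero _
    have hD : HasDerivAt (fun u : ℝ =>
        Complex.exp ((σ : ℂ) * (κ * u + (1 / 2) * ∫ s in (0:ℝ)..u, α s)) /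
          g u ^ ((1:ℂ) / 2)) (_ : ℂ) t := hE.div hW hW0
    rw [hZf]
    convert hD using 1
    have hw2 : g t ^ ((1:ℂ)/2) * g t ^ ((1:ℂ)/2) = g t := by
      rw [← Complex.cpow_add _ _ (hg0 t ht)]; norm_num
    have hwm : g t ^ ((1:ℂ)/2 - 1) = g t ^ ((1:ℂ)/2) / g t := by
      rw [Complex.cpow_sub _ _ (hg0 t ht), Complex.cpow_one]
    rw [hhdef]
    rw [hwm]
    set w := g t ^ ((1:ℂ)/2) with hw
    have hgt2 : κ + 1 / 2 * α t = g t := by simp only [hgdef]; ring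
    rw [hgt2, ← hw2]
    field_simp
    rw [← hw, ← hw2]
    field_simp
    ring
  refine ⟨fun t => h t * Z t, fun t =>
      (κ ^ 2 + κ * α t +
        (α t ^ 2 / 4 + 3 * α' t ^ 2 / (16 * (κ + α t / 2) ^ 2) -
          α'' t / (4 * (κ + α t / 2)))) * Z t, hA, ?_, fun t _ => rfl⟩
  intro t ht
  have h4g0 : (4 : ℂ) * g t ≠ 0 := by
    simpa using hg0 t ht
  have hh : HasDerivAt h
      (σ * (α' t / 2) -
        (α'' t * (4 * g t) - α' t * (4 * (α' t / 2))) / (4 * g t) ^ 2) t :=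
    ((hg t).const_mul (σ : ℂ)).sub ((hα' t).div ((hg t).const_mul 4) h4g0)
  have hd : HasDerivAt (fun t => h t * Z t) (_ : ℂ) t := hh.mul (hA t ht)
  have h0 : κ + α t / 2 ≠ 0 := hg0 t ht
  have key : (κ ^ 2 + κ * α t +
        (α t ^ 2 / 4 + 3 * α' t ^ 2 / (16 * (κ + α t / 2) ^ 2) -
          α'' t / (4 * (κ + α t / 2)))) =
      ((σ : ℂ) * (α' t / 2) -
        (α'' t * (4 * g t) - α' t * (4 * (α' t / 2))) / (4 * g t) ^ 2) + h t * h t := by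
    have hsc : (σ : ℂ) = 1 ∨ (σ : ℂ) = -1 := by
      rcases hσ with rfl | rfl <;> [left; right] <;> push_cast <;> ring
    have haux := horn_aux (κ + α t / 2) (α' t) (α'' t) (σ : ℂ) h0 hsc
    simp only [hhdef, hgdef]
    linear_combination haux
  convert hd using 1
  show (κ ^ 2 + κ * α t +
        (α t ^ 2 / 4 + 3 * α' t ^ 2 / (16 * (κ + α t / 2) ^ 2) -
          α'' t / (4 * (κ + α t / 2)))) * Z t = _
  rw [key]; ring
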